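/- arXiv:1309.2795 — 2 statements merged into one kernel-verified Lean document; each statement's English description precedes it below -/
import Mathlib

section
/- For all integers k ≥ 0, the double sum over all integers p and q of binomial(2k, k+p) · binomial(2k, k+q) · |p² - q²| equals 2k² · binomial(2k, k)². -/
open Finset

/-- Binomial coefficient with integer lower index, zero when the index is negative. -/
def ichoose (n : ℕ) (m : ℤ) : ℤ := if 0 ≤ m then n.choose m.toNat else 0

namespace Stmt1Aux

lemma sum_Icc_range (f : ℕ → ℤ) (a b : ℕ) :
    ∑ i ∈ Icc a b, f i = ∑ i ∈ range (b + 1 - a), f (a + i) := by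
  rw [← Finset.Ico_add_one_right_eq_Icc, Finset.sum_Ico_eq_sum_range]

section K
variable (k : ℕ)

/-- a_p = C(2k, k+p) -/
def ac (p : ℕ) : ℤ := ((2*k).choose (k+p) : ℤ)
/-- c_i = C(2k-1, k+i) -/
def cc (i : ℕ) : ℤ := ((2*k-1).choose (k+i) : ℤ)

variable {k}

lemma cc_top (hk : 1 ≤ k) : cc k k = 0 := by
  have : 2*k - 1 < k + k := by omega
  simp [cc, Nat.choose_eq_zero_of_lt this]

lemma pascal (hk : 1 ≤ k) (m : ℕ) : ac k (m+1) = cc k m + cc k (m+1) := by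
  have h1 : 2*k = (2*k-1) + 1 := by omega
  have h2 : k + (m+1) = (k + m) + 1 := by omega
  rw [ac, h1, h2, Nat.choose_succ_succ']
  push_cast [cc]
  ring

lemma key (hk : 1 ≤ k) (m : ℕ) :
    ((m:ℤ)+1) * ac k (m+1) = k * (cc k m - cc k (m+1)) := by
  have h := Nat.add_one_mul_choose_eq (2*k-1) (k+m)
  have h1 : 2*k-1+1 = 2*k := by omega
  have h2 : k+m+1 = k + (m+1) := by omega
  rw [h1, h2] at h
  have hc : (2*k : ℤ) * cc k m = ac k (m+1) * ((k:ℤ) + m + 1) := by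
    have := congrArg (Nat.cast : ℕ → ℤ) h
    push_cast at this
    rw [cc, ac]; push_cast; linarith
  have hp := pascal hk m
  calc ((m:ℤ)+1) * ac k (m+1)
      = ac k (m+1) * ((k:ℤ)+m+1) - (k:ℤ) * ac k (m+1) := by ring
    _ = (2*k:ℤ) * cc k m - k * (cc k m + cc k (m+1)) := by rw [← hc, hp]
    _ = k * (cc k m - cc k (m+1)) := by ring


/-- H k j = sum_{p=j}^{k} c_p -/
def H (k j : ℕ) : ℤ := ∑ p ∈ Icc j k, cc k p

lemma tele_range (G : ℕ → ℤ) (n : ℕ) :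
    ∑ i ∈ range n, (G i - G (i+1)) = G 0 - G n := Finset.sum_range_sub' G n

lemma H_top (hk : 1 ≤ k) : H k k = 0 := by
  simp [H, cc_top hk]

lemma H_range (j : ℕ) : H k j = ∑ i ∈ range (k + 1 - j), cc k (j + i) := by
  rw [H, sum_Icc_range]

lemma H_rec (hk : 1 ≤ k) {j : ℕ} (h1 : 1 ≤ j) (h2 : j ≤ k) :
    H k (j-1) = cc k (j-1) + H k j := by
  have hins : Icc (j-1) k = insert (j-1) (Icc j k) := by
    ext x; simp only [Finset.mem_insert, Finset.mem_Icc]; omega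
  have hnm : (j-1) ∉ Icc j k := by simp only [Finset.mem_Icc]; omega
  rw [H, hins, Finset.sum_insert hnm]
  rfl

/-- sum over Icc j k of p * a_p = k * c_(j-1) -/
lemma sumN (hk : 1 ≤ k) {j : ℕ} (h1 : 1 ≤ j) (h2 : j ≤ k) :
    ∑ p ∈ Icc j k, (p:ℤ) * ac k p = k * cc k (j-1) := by
  rw [sum_Icc_range]
  have step : ∀ i : ℕ, (↑(j+i):ℤ) * ac k (j+i)
      = (fun t => (k:ℤ) * cc k (j-1+t)) i - (fun t => (k:ℤ) * cc k (j-1+t)) (i+1) := by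
    intro i
    simp only
    have h := key hk (j-1+i)
    rw [show j-1+i+1 = j+i by omega] at h
    rw [show ((j+i:ℕ):ℤ) = ((j-1+i:ℕ):ℤ)+1 by omega, h,
      show j-1+(i+1) = j+i by omega]
    ring
  rw [Finset.sum_congr rfl (fun i _ => step i), Finset.sum_range_sub']
  show (k:ℤ) * cc k (j-1+0) - (k:ℤ) * cc k (j-1+(k+1-j)) = _
  rw [show j-1+0 = j-1 by omega, show j-1+(k+1-j) = k by omega, cc_top hk]
  ring

/-- sum over Icc j k of a_p = H(j-1) + H j -/
lemma sumR (hk : 1 ≤ k) {j : ℕ} (h1 : 1 ≤ j) (h2 : j ≤ k) :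
    ∑ p ∈ Icc j k, ac k p = H k (j-1) + H k j := by
  have e1 : ∀ p ∈ Icc 1 k, True := fun _ _ => trivial
  have step : ∀ p ∈ Icc j k, ac k p = cc k (p-1) + cc k p := by
    intro p hp; rw [Finset.mem_Icc] at hp
    have := pascal hk (p-1)
    rw [show p-1+1 = p by omega] at this
    exact this
  rw [Finset.sum_congr rfl step, Finset.sum_add_distrib]
  have t2 : ∑ p ∈ Icc j k, cc k p = H k j := rfl
  rw [t2]
  congr 1
  rw [sum_Icc_range, H_range]
  rw [show k + 1 - (j-1) = (k + 1 - j) + 1 by omega, Finset.sum_range_succ]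
  rw [show j - 1 + (k+1-j) = k by omega, cc_top hk, add_zero]
  apply Finset.sum_congr rfl; intro i _; congr 1; omega

lemma H_zero (hk : 1 ≤ k) : H k 0 = 4^(k-1) := by
  rw [H_range]
  rw [show k + 1 - 0 = k + 1 by omega, Finset.sum_range_succ]
  rw [show (0:ℕ) + k = k by omega, cc_top hk, add_zero]
  have e2 : ∀ i ∈ range k, cc k (0+i) = ((2*k-1).choose (k-1-i) : ℤ) := by
    intro i hi; rw [Finset.mem_range] at hi
    rw [cc, zero_add, ← Nat.choose_symm (show k+i ≤ 2*k-1 by omega),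
      show 2*k-1-(k+i) = k-1-i by omega]
  rw [Finset.sum_congr rfl e2]
  have hrefl := Finset.sum_range_reflect (fun i => ((2*k-1).choose i : ℤ)) k
  calc ∑ i ∈ range k, ((2*k-1).choose (k-1-i) : ℤ)
      = ∑ i ∈ range k, ((2*k-1).choose i : ℤ) := hrefl
    _ = 4^(k-1) := by
        have hh := Nat.sum_range_choose_halfway (k-1)
        rw [show 2*(k-1)+1 = 2*k-1 by omega, show (k-1)+1 = k by omega] at hh
        have := congrArg (Nat.cast : ℕ → ℤ) hh
        push_cast at this
        rw [← this]

/-- the core telescoping identity -/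
lemma core (hk : 1 ≤ k) :
    ∑ j ∈ Icc 1 k, cc k (j-1) * (∑ p ∈ Icc j k, ac k p) = 16^(k-1) := by
  have e1 : ∀ j ∈ Icc 1 k, cc k (j-1) * (∑ p ∈ Icc j k, ac k p)
      = (fun t => H k t^2) (j-1) - (fun t => H k t^2) ((j-1)+1) := by
    intro j hj; rw [Finset.mem_Icc] at hj
    simp only
    rw [sumR hk hj.1 hj.2, show j-1+1 = j by omega]
    have := H_rec hk hj.1 hj.2
    have hc : cc k (j-1) = H k (j-1) - H k j := by linarith
    rw [hc]; ring
  rw [Finset.sum_congr rfl e1, sum_Icc_range, show k + 1 - 1 = k by omega]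
  have step : ∀ i ∈ range k,
      (fun t => H k t^2) (1+i-1) - (fun t => H k t^2) ((1+i-1)+1)
      = (fun t => H k t^2) i - (fun t => H k t^2) (i+1) := by
    intro i _; simp only; congr 3 <;> omega
  rw [Finset.sum_congr rfl step, Finset.sum_range_sub']
  show H k 0^2 - H k k^2 = _
  rw [H_zero hk, H_top hk]
  rw [show ((4:ℤ)^(k-1))^2 = 16^(k-1) by rw [← pow_mul, show (k-1)*2 = 2*(k-1) by ring, pow_mul]; norm_num]
  ring

/-- second moment sum -/
lemma sumM2 (hk : 1 ≤ k) :
    ∑ p ∈ Icc 1 k, (p:ℤ)^2 * ac k p = k * 4^(k-1) := by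
  have step : ∀ p ∈ Icc 1 k, (p:ℤ)^2 * ac k p
      = (k:ℤ) * (((fun (t:ℕ) => ((t:ℤ)+1) * cc k t) (p-1) - (fun (t:ℕ) => ((t:ℤ)+1) * cc k t) ((p-1)+1)) + cc k p) := by
    intro p hp; rw [Finset.mem_Icc] at hp
    simp only
    rw [show p-1+1 = p by omega]
    have h := key hk (p-1)
    rw [show p-1+1 = p by omega] at h
    have hc : ((p-1:ℕ):ℤ) + 1 = (p:ℤ) := by omega
    rw [← hc]
    linear_combination (((p-1:ℕ):ℤ)+1) * h
  rw [Finset.sum_congr rfl step, ← Finset.mul_sum, Finset.sum_add_distrib]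
  have t2 : ∑ p ∈ Icc 1 k, cc k p = H k 1 := rfl
  rw [t2]
  have t1 : ∑ p ∈ Icc 1 k,
      ((fun (t:ℕ) => ((t:ℤ)+1) * cc k t) (p-1) - (fun (t:ℕ) => ((t:ℤ)+1) * cc k t) ((p-1)+1)) = cc k 0 := by
    rw [sum_Icc_range, show k + 1 - 1 = k by omega]
    have step2 : ∀ i ∈ range k,
        ((fun (t:ℕ) => ((t:ℤ)+1) * cc k t) (1+i-1) - (fun (t:ℕ) => ((t:ℤ)+1) * cc k t) ((1+i-1)+1))
        = ((fun (t:ℕ) => ((t:ℤ)+1) * cc k t) i - (fun (t:ℕ) => ((t:ℤ)+1) * cc k t) (i+1)) := by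
      intro i _; simp only; rw [show 1+i-1 = i by omega]
    rw [Finset.sum_congr rfl step2, Finset.sum_range_sub']
    show (((0:ℕ):ℤ)+1) * cc k 0 - (((k:ℕ):ℤ)+1) * cc k k = _
    rw [cc_top hk]; push_cast; ring
  rw [t1]
  have := H_rec hk (le_refl 1) hk
  simp only [show (1:ℕ)-1 = 0 from rfl] at this
  rw [show cc k 0 + H k 1 = H k 0 by linarith, H_zero hk]

end K

section IntSide

/-- bridge: ichoose at a natural offset -/
lemma ich_nat (k j : ℕ) : ichoose (2*k) ((k:ℤ) + (j:ℤ)) = ac k j := by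
  rw [show ((k:ℤ) + (j:ℤ)) = ((k + j : ℕ) : ℤ) by push_cast; ring]
  unfold ichoose
  rw [if_pos (Int.natCast_nonneg _), Int.toNat_natCast]
  rfl

/-- symmetry of the shifted binomial -/
lemma ich_neg (k : ℕ) (x : ℤ) : ichoose (2*k) ((k:ℤ) + -x) = ichoose (2*k) ((k:ℤ) + x) := by
  have main : ∀ y : ℤ, 0 ≤ y → ichoose (2*k) ((k:ℤ) + -y) = ichoose (2*k) ((k:ℤ) + y) := by
    intro y hy
    rcases le_or_gt y k with h | h
    · unfold ichoose
      rw [if_pos (by omega), if_pos (by omega)]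
      have h1 : ((k:ℤ) + y).toNat ≤ 2*k := by omega
      have h2 : ((k:ℤ) + -y).toNat = 2*k - ((k:ℤ) + y).toNat := by omega
      rw [h2, Nat.choose_symm h1]
    · unfold ichoose
      rw [if_neg (by omega), if_pos (by omega)]
      have h1 : 2*k < ((k:ℤ) + y).toNat := by omega
      rw [Nat.choose_eq_zero_of_lt h1]
      simp
  rcases le_or_gt 0 x with h | h
  · exact main x h
  · have := main (-x) (by omega)
    rw [neg_neg] at this
    exact this.symm

/-- reindex an integer interval sum to range -/
lemma int_reindex (k : ℕ) (f : ℤ → ℤ) :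
    ∑ p ∈ Icc (-(k:ℤ)) k, f p = ∑ i ∈ range (2*k+1), f ((i:ℤ) - k) := by
  apply Finset.sum_nbij' (fun p : ℤ => (p + (k:ℤ)).toNat) (fun i : ℕ => (i:ℤ) - (k:ℤ))
  · intro a ha; rw [Finset.mem_Icc] at ha; rw [Finset.mem_range]; omega
  · intro a ha; rw [Finset.mem_range] at ha; rw [Finset.mem_Icc]; omega
  · intro a ha; rw [Finset.mem_Icc] at ha; omega
  · intro a ha; rw [Finset.mem_range] at ha; omega
  · intro a ha; rw [Finset.mem_Icc] at ha; congr 1; omega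

/-- fold a symmetric function -/
lemma fold (k : ℕ) (g : ℤ → ℤ) (hg : ∀ x : ℤ, g (-x) = g x) :
    ∑ p ∈ Icc (-(k:ℤ)) k, g p = g 0 + 2 * ∑ j ∈ Icc 1 k, g (j:ℤ) := by
  induction k with
  | zero => simp
  | succ n ih =>
    have hins : Icc (-((n+1:ℕ):ℤ)) ((n+1:ℕ):ℤ)
        = insert (-((n:ℤ)+1)) (insert ((n:ℤ)+1) (Icc (-(n:ℤ)) n)) := by
      ext x
      simp only [Finset.mem_insert, Finset.mem_Icc]
      push_cast
      omega
    have h1 : (-((n:ℤ)+1)) ∉ insert ((n:ℤ)+1) (Icc (-(n:ℤ)) n) := by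
      simp only [Finset.mem_insert, Finset.mem_Icc]; push_cast; omega
    have h2 : ((n:ℤ)+1) ∉ Icc (-(n:ℤ)) n := by
      simp only [Finset.mem_Icc]; push_cast; omega
    rw [hins, Finset.sum_insert h1, Finset.sum_insert h2, ih]
    have h3 : Icc 1 (n+1) = insert (n+1) (Icc 1 n) := by
      ext x; simp only [Finset.mem_insert, Finset.mem_Icc]; omega
    have h4 : (n+1) ∉ Icc 1 n := by simp only [Finset.mem_Icc]; omega
    rw [h3, Finset.sum_insert h4]
    have h5 : g (-((n:ℤ)+1)) = g ((n:ℤ)+1) := hg _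
    push_cast
    rw [h5]
    ring

/-- indicator sum -/
lemma sum_ind (k : ℕ) (m : ℤ) (h0 : 0 ≤ m) (hm : m ≤ k) :
    ∑ j ∈ Icc 1 k, (if (j:ℤ) ≤ m then (1:ℤ) else 0) = m := by
  rw [Finset.sum_boole]
  have hf : Finset.filter (fun j : ℕ => (j:ℤ) ≤ m) (Icc 1 k) = Icc 1 m.toNat := by
    ext j
    simp only [Finset.mem_filter, Finset.mem_Icc]
    omega
  rw [hf, Nat.card_Icc]
  omega

/-- the key absolute-value identity -/
lemma abs_sq_sub (p q : ℤ) :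
    |p^2 - q^2| = p^2 + q^2 + 2 * (|p| * |q|) - 2*(min |p| |q| * (|p| + |q|)) := by
  rw [← sq_abs p, ← sq_abs q]
  rcases le_total |p| |q| with h | h
  · rw [min_eq_left h, abs_of_nonpos (by nlinarith [abs_nonneg p, abs_nonneg q])]
    ring
  · rw [min_eq_right h, abs_of_nonneg (by nlinarith [abs_nonneg p, abs_nonneg q])]
    ring

/-- indicator function -/
def ef (j : ℕ) (p : ℤ) : ℤ := if (j:ℤ) ≤ |p| then 1 else 0

lemma ef_neg (j : ℕ) (x : ℤ) : ef j (-x) = ef j x := by rw [ef, ef, abs_neg]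

lemma ef_zero {j : ℕ} (hj : 1 ≤ j) : ef j 0 = 0 := by
  rw [ef, if_neg]
  simp only [abs_zero]
  omega

lemma ef_natCast (j p : ℕ) : ef j (p:ℤ) = if j ≤ p then 1 else 0 := by
  rw [ef, Int.abs_natCast]
  simp [Int.ofNat_le]

lemma central {k : ℕ} (hk : 1 ≤ k) : ((2*k).choose k : ℤ) = 2 * cc k 0 := by
  have h1 : (2*k).choose k = (2*k-1).choose (k-1) + (2*k-1).choose k := by
    rw [show 2*k = (2*k-1)+1 by omega, show (2*k-1)+1-1 = 2*k-1 by omega]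
    rw [show k = (k-1)+1 by omega]
    rw [Nat.choose_succ_succ']
    congr 2 <;> omega
  have h2 : (2*k-1).choose (k-1) = (2*k-1).choose k := by
    rw [← Nat.choose_symm (show k ≤ 2*k-1 by omega)]
    congr 1; omega
  rw [cc, show k + 0 = k by omega]
  rw [h1, h2]
  push_cast; ring

end IntSide
end Stmt1Aux
open Stmt1Aux in
theorem stmt1 (k : ℕ) :
    ∑ p ∈ Finset.Icc (-(k : ℤ)) k, ∑ q ∈ Finset.Icc (-(k : ℤ)) k,
      ichoose (2 * k) (k + p) * ichoose (2 * k) (k + q) * |p ^ 2 - q ^ 2|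
      = 2 * k ^ 2 * ((2 * k).choose k : ℤ) ^ 2 := by
  rcases Nat.eq_zero_or_pos k with rfl | hk
  · simp
  set I := Finset.Icc (-(k : ℤ)) (k:ℤ) with hI
  set a : ℤ → ℤ := fun p => ichoose (2 * k) ((k:ℤ) + p) with ha
  have ha_neg : ∀ x : ℤ, a (-x) = a x := by
    intro x; simp only [ha]; exact ich_neg k x
  have ha_nat : ∀ j : ℕ, a (j:ℤ) = ac k j := by
    intro j; simp only [ha]; exact ich_nat k j
  -- component values
  have hAval : ∑ p ∈ I, a p = 4^k := by
    rw [hI, int_reindex]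
    have step : ∀ i ∈ range (2*k+1), a ((i:ℤ) - k) = ((2*k).choose i : ℤ) := by
      intro i _
      simp only [ha]
      rw [show (k:ℤ) + ((i:ℤ) - k) = ((i:ℕ):ℤ) by ring]
      unfold ichoose
      rw [if_pos (Int.natCast_nonneg _), Int.toNat_natCast]
    rw [Finset.sum_congr rfl step, ← Nat.cast_sum, Nat.sum_range_choose]
    push_cast
    rw [pow_mul]
    norm_num
  have hM2val : ∑ p ∈ I, p^2 * a p = 2*(k:ℤ)*4^(k-1) := by
    rw [hI, Stmt1Aux.fold k (fun p => p^2 * a p) (by intro x; rw [neg_sq, ha_neg])]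
    rw [show ((0:ℤ)^2 * a 0) = 0 by ring]
    have step : ∀ j ∈ Icc 1 k, ((j:ℕ):ℤ)^2 * a ((j:ℕ):ℤ) = ((j:ℕ):ℤ)^2 * ac k j := by
      intro j _; rw [ha_nat]
    rw [Finset.sum_congr rfl step, sumM2 hk]
    ring
  have hTval : ∑ p ∈ I, |p| * a p = (k:ℤ) * ((2*k).choose k : ℤ) := by
    rw [hI, Stmt1Aux.fold k (fun p => |p| * a p) (by intro x; rw [abs_neg, ha_neg])]
    rw [show |(0:ℤ)| * a 0 = 0 by simp]
    have step : ∀ j ∈ Icc 1 k, |((j:ℕ):ℤ)| * a ((j:ℕ):ℤ) = ((j:ℕ):ℤ) * ac k j := by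
      intro j _; rw [Int.abs_natCast, ha_nat]
    rw [Finset.sum_congr rfl step, sumN hk (le_refl 1) hk, central hk]
    rw [show (1:ℕ) - 1 = 0 from rfl]
    ring
  have hVval : ∀ j : ℕ, 1 ≤ j → j ≤ k →
      ∑ p ∈ I, ef j p * a p = 2 * ∑ p ∈ Icc j k, ac k p := by
    intro j hj1 hj2
    rw [hI, Stmt1Aux.fold k (fun p => ef j p * a p) (by intro x; rw [ef_neg, ha_neg])]
    rw [ef_zero hj1, zero_mul, zero_add]
    have step : ∀ p ∈ Icc 1 k, ef j ((p:ℕ):ℤ) * a ((p:ℕ):ℤ)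
        = if j ≤ p then ac k p else 0 := by
      intro p _; rw [ef_natCast, ha_nat]; split_ifs <;> simp
    rw [Finset.sum_congr rfl step]
    congr 1
    rw [← Finset.sum_filter]
    congr 1
    ext x; simp only [Finset.mem_filter, Finset.mem_Icc]; omega
  have hUval : ∀ j : ℕ, 1 ≤ j → j ≤ k →
      ∑ p ∈ I, (ef j p * |p|) * a p = 2 * ((k:ℤ) * cc k (j-1)) := by
    intro j hj1 hj2
    rw [hI, Stmt1Aux.fold k (fun p => (ef j p * |p|) * a p)
      (by intro x; rw [ef_neg, abs_neg, ha_neg])]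
    rw [ef_zero hj1, zero_mul, zero_mul, zero_add]
    have step : ∀ p ∈ Icc 1 k, (ef j ((p:ℕ):ℤ) * |((p:ℕ):ℤ)|) * a ((p:ℕ):ℤ)
        = if j ≤ p then ((p:ℕ):ℤ) * ac k p else 0 := by
      intro p _; rw [ef_natCast, Int.abs_natCast, ha_nat]; split_ifs <;> simp
    rw [Finset.sum_congr rfl step]
    congr 1
    rw [← Finset.sum_filter]
    rw [show Finset.filter (fun p : ℕ => j ≤ p) (Icc 1 k) = Icc j k by
      ext x; simp only [Finset.mem_filter, Finset.mem_Icc]; omega]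
    exact sumN hk hj1 hj2
  -- termwise expansion
  have hterm : ∀ p ∈ I, ∀ q ∈ I, a p * a q * |p^2 - q^2|
      = (a p * (q^2 * a q) + (p^2 * a p) * a q + 2 * ((|p| * a p) * (|q| * a q)))
        - 2 * ∑ j ∈ Icc 1 k, ((ef j p * |p|) * a p * (ef j q * a q)
            + (ef j p * a p) * ((ef j q * |q|) * a q)) := by
    intro p hp q hq
    rw [hI, Finset.mem_Icc] at hp hq
    have hminsum : ∑ j ∈ Icc 1 k, ef j p * ef j q = min |p| |q| := by
      have hper : ∀ j ∈ Icc 1 k, ef j p * ef j q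
          = if (j:ℤ) ≤ min |p| |q| then (1:ℤ) else 0 := by
        intro j _
        rw [ef, ef]
        by_cases h1 : (j:ℤ) ≤ |p| <;> by_cases h2 : (j:ℤ) ≤ |q| <;>
          simp [h1, h2, le_min_iff]
      rw [Finset.sum_congr rfl hper]
      exact sum_ind k _ (le_min (abs_nonneg _) (abs_nonneg _))
        (le_trans (min_le_left _ _) (abs_le.mpr ⟨hp.1, hp.2⟩))
    have hper2 : ∀ j ∈ Icc 1 k, ((ef j p * |p|) * a p * (ef j q * a q)
          + (ef j p * a p) * ((ef j q * |q|) * a q))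
        = (ef j p * ef j q) * ((|p| + |q|) * (a p * a q)) := by
      intro j _; ring
    rw [Finset.sum_congr rfl hper2, ← Finset.sum_mul, hminsum, abs_sq_sub]
    ring
  calc ∑ p ∈ I, ∑ q ∈ I, a p * a q * |p^2 - q^2|
      = ∑ p ∈ I, ∑ q ∈ I, ((a p * (q^2 * a q) + (p^2 * a p) * a q
            + 2 * ((|p| * a p) * (|q| * a q)))
          - 2 * ∑ j ∈ Icc 1 k, ((ef j p * |p|) * a p * (ef j q * a q)
              + (ef j p * a p) * ((ef j q * |q|) * a q))) :=
        Finset.sum_congr rfl (fun p hp => Finset.sum_congr rfl (fun q hq => hterm p hp q hq))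
    _ = ∑ p ∈ I, ((a p * (∑ q ∈ I, q^2 * a q) + (p^2 * a p) * (∑ q ∈ I, a q)
            + 2 * ((|p| * a p) * (∑ q ∈ I, |q| * a q)))
          - 2 * ∑ j ∈ Icc 1 k, ((ef j p * |p|) * a p * (∑ q ∈ I, ef j q * a q)
              + (ef j p * a p) * (∑ q ∈ I, (ef j q * |q|) * a q))) := by
        apply Finset.sum_congr rfl
        intro p _
        rw [Finset.sum_sub_distrib]
        congr 1
        · rw [Finset.sum_add_distrib, Finset.sum_add_distrib]
          congr 1
          · congr 1
            · exact (Finset.mul_sum I (fun q => q^2 * a q) (a p)).symm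
            · exact (Finset.mul_sum I a (p^2 * a p)).symm
          · rw [← Finset.mul_sum]
            congr 1
            exact (Finset.mul_sum I (fun q => |q| * a q) (|p| * a p)).symm
        · rw [← Finset.mul_sum]
          congr 1
          rw [Finset.sum_comm]
          apply Finset.sum_congr rfl
          intro j _
          rw [Finset.sum_add_distrib]
          congr 1
          · exact (Finset.mul_sum I (fun q => ef j q * a q) ((ef j p * |p|) * a p)).symm
          · exact (Finset.mul_sum I (fun q => (ef j q * |q|) * a q) (ef j p * a p)).symm
    _ = ((∑ p ∈ I, a p) * (∑ q ∈ I, q^2 * a q) + (∑ p ∈ I, p^2 * a p) * (∑ q ∈ I, a q)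
            + 2 * ((∑ p ∈ I, |p| * a p) * (∑ q ∈ I, |q| * a q)))
          - 2 * ∑ j ∈ Icc 1 k, ((∑ p ∈ I, (ef j p * |p|) * a p) * (∑ q ∈ I, ef j q * a q)
              + (∑ p ∈ I, ef j p * a p) * (∑ q ∈ I, (ef j q * |q|) * a q)) := by
        rw [Finset.sum_sub_distrib]
        congr 1
        · rw [Finset.sum_add_distrib, Finset.sum_add_distrib]
          congr 1
          · congr 1
            · exact (Finset.sum_mul I a _).symm
            · exact (Finset.sum_mul I (fun p => p^2 * a p) _).symm
          · rw [← Finset.mul_sum]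
            congr 1
            exact (Finset.sum_mul I (fun p => |p| * a p) _).symm
        · rw [← Finset.mul_sum]
          congr 1
          rw [Finset.sum_comm]
          apply Finset.sum_congr rfl
          intro j _
          rw [Finset.sum_add_distrib]
          congr 1
          · exact (Finset.sum_mul I (fun p => (ef j p * |p|) * a p) _).symm
          · exact (Finset.sum_mul I (fun p => ef j p * a p) _).symm
    _ = 2 * k ^ 2 * ((2 * k).choose k : ℤ) ^ 2 := by
        have hWval : ∑ j ∈ Icc 1 k, ((∑ p ∈ I, (ef j p * |p|) * a p) * (∑ q ∈ I, ef j q * a q)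
            + (∑ p ∈ I, ef j p * a p) * (∑ q ∈ I, (ef j q * |q|) * a q))
            = 8 * (k:ℤ) * 16^(k-1) := by
          have step : ∀ j ∈ Icc 1 k, ((∑ p ∈ I, (ef j p * |p|) * a p) * (∑ q ∈ I, ef j q * a q)
              + (∑ p ∈ I, ef j p * a p) * (∑ q ∈ I, (ef j q * |q|) * a q))
              = 8 * (k:ℤ) * (cc k (j-1) * ∑ p ∈ Icc j k, ac k p) := by
            intro j hj
            rw [Finset.mem_Icc] at hj
            rw [hUval j hj.1 hj.2, hVval j hj.1 hj.2]
            ring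
          rw [Finset.sum_congr rfl step, ← Finset.mul_sum, core hk]
        rw [hWval, hAval, hM2val, hTval]
        have h4 : (4:ℤ)^k = 4 * 4^(k-1) := by
          rw [← pow_succ']
          congr 1
          omega
        have h16 : (4:ℤ)^(k-1) * 4^(k-1) = 16^(k-1) := by
          rw [← mul_pow]; norm_num
        rw [h4]
        linear_combination (16 * (k:ℤ)) * h16
end

section
/- For all integers k ≥ 1, 8 · Σ_{p>q>0} binomial(2k, k+p) · binomial(2k, k+q) · (p² - q²) = 16k(2k-1) · { binomial(2k-2, k) · Σ_{p>0} binomial(2k-2, k+p-1) - binomial(2k-2, k-1) · Σ_{p>0} binomial(2k-2, k+p) }. -/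
open Finset

lemma ichoose_natCast (N m : ℕ) : ichoose N (m : ℤ) = N.choose m := by
  simp [ichoose]

lemma ichoose_eq (N : ℕ) (m : ℤ) (a : ℕ) (h : m = (a : ℤ)) :
    ichoose N m = (N.choose a : ℤ) := by
  subst h; exact ichoose_natCast N a

/-- auxiliary: `A` sequence -/
def AA (n p : ℕ) : ℤ := ((2*n+2).choose (n+p+1) : ℤ)

/-- auxiliary: `c` sequence -/
def cc (n j : ℕ) : ℤ := ((2*n).choose (n+j) : ℤ)

/-- auxiliary: partial-sum difference -/
def UU (n p : ℕ) : ℤ := (∑ q ∈ Ico 1 p, cc n q) - ∑ q ∈ Ico (p+1) (n+2), cc n q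

lemma sum_Icc_cast (a b : ℕ) (f : ℤ → ℤ) :
    ∑ p ∈ Finset.Icc (a:ℤ) (b:ℤ), f p = ∑ p ∈ Finset.Icc a b, f (p:ℤ) := by
  refine Finset.sum_nbij' (fun p => p.toNat) (fun p => (p:ℤ)) ?_ ?_ ?_ ?_ ?_
  · intro x hx; simp only [Finset.mem_Icc] at *; omega
  · intro x hx; simp only [Finset.mem_Icc] at *; omega
  · intro x hx; simp only [Finset.mem_Icc] at hx
    show ((x.toNat : ℤ)) = x
    omega
  · intro x hx; simp only [Finset.mem_Icc] at hx
    show ((x : ℤ)).toNat = x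
    omega
  · intro x hx; simp only [Finset.mem_Icc] at hx
    show f x = f ((x.toNat : ℤ))
    rw [Int.toNat_of_nonneg (by omega)]

lemma sum_Icc_cast1 (b : ℕ) (f : ℤ → ℤ) :
    ∑ p ∈ Finset.Icc (1:ℤ) (b:ℤ), f p = ∑ p ∈ Finset.Icc 1 b, f (p:ℤ) := by
  simpa using sum_Icc_cast 1 b f

lemma sum_Icc_cast_succ (a b : ℕ) (f : ℤ → ℤ) :
    ∑ p ∈ Finset.Icc ((a:ℤ)+1) (b:ℤ), f p = ∑ p ∈ Finset.Icc (a+1) b, f (p:ℤ) := by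
  have := sum_Icc_cast (a+1) b f
  simpa using this

/-- key pointwise identity: `p² A_p = (n+1)² A_p - 2(n+1)(2n+1) c_p`. -/
lemma point1 (n p : ℕ) (hp : p ≤ n+1) :
    ((p:ℤ))^2 * AA n p
      = ((n:ℤ)+1)^2 * AA n p - 2*((n:ℤ)+1)*(2*(n:ℤ)+1) * cc n p := by
  have h1 := Nat.add_one_mul_choose_eq (2*n+1) (n+p)
  have h2 := Nat.choose_succ_right_eq (2*n+1) (n+p)
  have h3 := Nat.add_one_mul_choose_eq (2*n) (n+p)
  rw [show 2*n+1+1 = 2*n+2 from by omega] at h1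
  have hle : n + p ≤ 2*n+1 := by omega
  zify [hle] at h1 h2 h3
  unfold AA cc
  linear_combination (2*(n:ℤ)+2) * h3 + (2*(n:ℤ)+2) * h2 + ((n:ℤ)+1-(p:ℤ)) * h1

lemma pas (m r : ℕ) :
    ((m+2).choose (r+2) : ℤ) = (m.choose r : ℤ) + 2*(m.choose (r+1) : ℤ) + (m.choose (r+2) : ℤ) := by
  rw [show m+2 = (m+1)+1 from rfl, show r+2 = (r+1)+1 from rfl,
    Nat.choose_succ_succ (m+1) (r+1), Nat.choose_succ_succ m r, Nat.choose_succ_succ m (r+1)]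
  push_cast; ring

lemma AApascal (n p : ℕ) : AA n (p+1) = cc n p + 2 * cc n (p+1) + cc n (p+2) := by
  unfold AA cc
  rw [show n+(p+1)+1 = (n+p)+2 from by omega, show n+(p+1) = (n+p)+1 from by omega,
    show n+(p+2) = (n+p)+2 from by omega]
  exact pas (2*n) (n+p)

lemma cc_top (n j : ℕ) (h : n + 1 ≤ j) : cc n j = 0 := by
  unfold cc
  rw [Nat.choose_eq_zero_of_lt (by omega)]
  simp

/-- difference relation for `UU` away from the boundary. -/
lemma Udiff (n a : ℕ) (ha : 1 ≤ a) (ha' : a ≤ n) :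
    UU n (a+2) - UU n a = cc n a + 2*cc n (a+1) + cc n (a+2) := by
  unfold UU
  have hhead : ∑ q ∈ Ico 1 (a+2), cc n q
      = (∑ q ∈ Ico 1 a, cc n q) + cc n a + cc n (a+1) := by
    rw [Finset.sum_Ico_succ_top (by omega), Finset.sum_Ico_succ_top (by omega)]
  have htail1 : ∑ q ∈ Ico (a+1) (n+2), cc n q
      = cc n (a+1) + ∑ q ∈ Ico (a+2) (n+2), cc n q :=
    Finset.sum_eq_sum_Ico_succ_bot (by omega) _
  rcases Nat.lt_or_ge a n with hlt | hge
  · have htail2 : ∑ q ∈ Ico (a+2) (n+2), cc n q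
        = cc n (a+2) + ∑ q ∈ Ico (a+3) (n+2), cc n q :=
      Finset.sum_eq_sum_Ico_succ_bot (by omega) _
    rw [hhead, htail1, htail2]; ring
  · have hae : a = n := by omega
    have he1 : Ico (a+2) (n+2) = (∅ : Finset ℕ) := Finset.Ico_eq_empty (by omega)
    have he2 : Ico (a+3) (n+2) = (∅ : Finset ℕ) := Finset.Ico_eq_empty (by omega)
    have he3 : cc n (a+2) = 0 := cc_top n (a+2) (by omega)
    rw [hhead, htail1, he1, he2, he3]
    simp only [Finset.sum_empty]
    ring

lemma A1U (n : ℕ) : AA n 1 = UU n 2 - UU n 0 + cc n 0 := by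
  have hp := AApascal n 0
  simp only [zero_add] at hp
  rw [hp]
  unfold UU
  have h0 : Ico 1 0 = (∅ : Finset ℕ) := Finset.Ico_eq_empty (by omega)
  have h1 : ∑ q ∈ Ico 1 2, cc n q = cc n 1 := by
    rw [show (2:ℕ) = 1+1 from rfl, Finset.sum_Ico_succ_top (by omega)]
    simp
  have h2 : ∑ q ∈ Ico (0+1) (n+2), cc n q = cc n 1 + ∑ q ∈ Ico 2 (n+2), cc n q := by
    have := Finset.sum_eq_sum_Ico_succ_bot (f := cc n) (show 1 < n+2 by omega)
    simpa using this
  rcases Nat.eq_zero_or_pos n with hn | hn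
  · subst hn
    have e1 : Ico (2+1) (0+2) = (∅ : Finset ℕ) := Finset.Ico_eq_empty (by omega)
    have e3 : cc 0 2 = 0 := cc_top 0 2 (by omega)
    rw [h0, h1, e1, e3]
    simp only [Finset.sum_empty]
    ring
  · have h3 : ∑ q ∈ Ico 2 (n+2), cc n q = cc n 2 + ∑ q ∈ Ico (2+1) (n+2), cc n q :=
      Finset.sum_eq_sum_Ico_succ_bot (by omega) _
    rw [h0, h1, h2, h3]
    simp only [Finset.sum_empty]
    ring

theorem stmt12 (k : ℕ) (hk : 1 ≤ k) :
    8 * ∑ q ∈ Finset.Icc (1 : ℤ) k, ∑ p ∈ Finset.Icc (q + 1) k,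
          ichoose (2 * k) (k + p) * ichoose (2 * k) (k + q) * (p ^ 2 - q ^ 2)
      = 16 * k * (2 * k - 1) *
          (ichoose (2 * k - 2) k * ∑ p ∈ Finset.Icc (1 : ℤ) k, ichoose (2 * k - 2) (k + p - 1)
            - ichoose (2 * k - 2) (k - 1) *
                ∑ p ∈ Finset.Icc (1 : ℤ) k, ichoose (2 * k - 2) (k + p)) := by
  obtain ⟨n, rfl⟩ : ∃ n, k = n + 1 := ⟨k - 1, by omega⟩
  clear hk
  rw [show 2*(n+1) - 2 = 2*n from by omega]
  set Γ : ℤ := ∑ q ∈ Ico 1 (n+2), cc n q with hΓ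
  -- convert the three Icc-over-ℤ sums into ℕ-indexed sums
  have eLHS : ∑ q ∈ Finset.Icc (1 : ℤ) ((n+1:ℕ):ℤ), ∑ p ∈ Finset.Icc (q + 1) ((n+1:ℕ):ℤ),
        ichoose (2 * (n+1)) ((n+1:ℕ) + p) * ichoose (2 * (n+1)) ((n+1:ℕ) + q) * (p ^ 2 - q ^ 2)
      = ∑ q ∈ Finset.Icc 1 (n+1), ∑ p ∈ Finset.Icc (q+1) (n+1),
          AA n p * AA n q * ((p:ℤ) ^ 2 - (q:ℤ) ^ 2) := by
    rw [sum_Icc_cast1]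
    refine Finset.sum_congr rfl (fun q hq => ?_)
    rw [sum_Icc_cast_succ]
    refine Finset.sum_congr rfl (fun p hp => ?_)
    rw [ichoose_eq (2*(n+1)) _ (n+p+1) (by push_cast; ring),
        ichoose_eq (2*(n+1)) _ (n+q+1) (by push_cast; ring)]
    unfold AA
    rw [show 2*(n+1) = 2*n+2 from by omega]
  have eR1 : ∑ p ∈ Finset.Icc (1 : ℤ) ((n+1:ℕ):ℤ), ichoose (2*n) ((n+1:ℕ) + p - 1)
      = ∑ p ∈ Finset.Icc 1 (n+1), cc n p := by
    rw [sum_Icc_cast1]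
    refine Finset.sum_congr rfl (fun p hp => ?_)
    rw [ichoose_eq (2*n) _ (n+p) (by push_cast; ring)]
    rfl
  have eR2 : ∑ p ∈ Finset.Icc (1 : ℤ) ((n+1:ℕ):ℤ), ichoose (2*n) ((n+1:ℕ) + p)
      = ∑ p ∈ Finset.Icc 1 (n+1), cc n (p+1) := by
    rw [sum_Icc_cast1]
    refine Finset.sum_congr rfl (fun p hp => ?_)
    rw [ichoose_eq (2*n) _ (n+p+1) (by push_cast; ring)]
    unfold cc
    rw [show n+(p+1) = n+p+1 from by omega]
  have eR3 : ichoose (2*n) ((n+1:ℕ):ℤ) = cc n 1 := by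
    rw [ichoose_eq (2*n) _ (n+1) (by push_cast; ring)]; rfl
  have eR4 : ichoose (2*n) (((n+1:ℕ):ℤ) - 1) = cc n 0 := by
    rw [ichoose_eq (2*n) _ n (by push_cast; ring)]
    unfold cc
    rw [show n+0 = n from by omega]
  push_cast at eLHS eR1 eR2 eR3 eR4 ⊢
  rw [eLHS, eR1, eR2, eR3, eR4]
  -- Step 1: pointwise reduction of the summand
  have step1 : ∑ q ∈ Finset.Icc 1 (n+1), ∑ p ∈ Finset.Icc (q+1) (n+1),
        AA n p * AA n q * ((p:ℤ) ^ 2 - (q:ℤ) ^ 2)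
      = (2*((n:ℤ)+1)*(2*(n:ℤ)+1)) * ∑ q ∈ Finset.Icc 1 (n+1), ∑ p ∈ Finset.Icc (q+1) (n+1),
          (cc n q * AA n p - cc n p * AA n q) := by
    rw [Finset.mul_sum]
    refine Finset.sum_congr rfl (fun q hq => ?_)
    rw [Finset.mul_sum]
    refine Finset.sum_congr rfl (fun p hp => ?_)
    simp only [Finset.mem_Icc] at hq hp
    have h1 := point1 n p (by omega)
    have h2 := point1 n q (by omega)
    linear_combination (AA n q) * h1 - (AA n p) * h2
  rw [step1]
  -- Step 2: swap the triangle sum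
  have hswap : ∑ q ∈ Finset.Icc 1 (n+1), ∑ p ∈ Finset.Icc (q+1) (n+1),
        (cc n q * AA n p - cc n p * AA n q)
      = ∑ p ∈ Finset.Icc 1 (n+1), AA n p * UU n p := by
    simp only [Finset.sum_sub_distrib]
    have hT1 : ∑ q ∈ Finset.Icc 1 (n+1), ∑ p ∈ Finset.Icc (q+1) (n+1), cc n q * AA n p
        = ∑ p ∈ Finset.Icc 1 (n+1), AA n p * ∑ q ∈ Ico 1 p, cc n q := by
      have hIcc : ∀ (a b : ℕ), Finset.Icc a b = Finset.Ico a (b+1) := fun a b =>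
        (Finset.Ico_add_one_right_eq_Icc a b).symm
      simp only [hIcc]
      rw [Finset.sum_Ico_Ico_comm' 1 (n+1+1) (fun q p => cc n q * AA n p)]
      refine Finset.sum_congr rfl (fun p hp => ?_)
      rw [← Finset.sum_mul]
      ring
    have hT2 : ∑ q ∈ Finset.Icc 1 (n+1), ∑ p ∈ Finset.Icc (q+1) (n+1), cc n p * AA n q
        = ∑ q ∈ Finset.Icc 1 (n+1), AA n q * ∑ p ∈ Ico (q+1) (n+2), cc n p := by
      refine Finset.sum_congr rfl (fun q hq => ?_)
      rw [show Finset.Icc (q+1) (n+1) = Finset.Ico (q+1) (n+2) from (Finset.Ico_add_one_right_eq_Icc _ _).symm,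
        ← Finset.sum_mul]
      ring
    rw [hT1, hT2, ← Finset.sum_sub_distrib]
    refine Finset.sum_congr rfl (fun p hp => ?_)
    unfold UU
    ring
  rw [hswap]
  -- Step 3: telescope
  have htel : ∑ p ∈ Finset.Icc 1 (n+1), AA n p * UU n p
      = UU n (n+2) * UU n (n+1) - UU n 0 * UU n 1 + cc n 0 * UU n 1 := by
    rw [show Finset.Icc 1 (n+1) = Finset.Ico 1 (n+2) from (Finset.Ico_add_one_right_eq_Icc _ _).symm,
      Finset.sum_Ico_eq_sum_range]
    rw [show n+2-1 = n+1 from by omega]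
    rw [Finset.sum_range_succ']
    have hbody : ∀ i ∈ Finset.range n,
        AA n (1+(i+1)) * UU n (1+(i+1))
          = (fun j => UU n (j+2) * UU n (j+1)) (i+1) - (fun j => UU n (j+2) * UU n (j+1)) i := by
      intro i hi
      simp only [Finset.mem_range] at hi
      have hAi : AA n (i+2) = UU n (i+3) - UU n (i+1) := by
        have h1 := AApascal n (i+1)
        have h2 := Udiff n (i+1) (by omega) (by omega)
        rw [show i+1+2 = i+3 from by omega] at h2
        rw [show i+1+1 = i+2 from by omega, show i+1+2 = i+3 from by omega] at h1
        linarith [h1, h2]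
      rw [show 1+(i+1) = i+2 from by omega, hAi]
      show (UU n (i+3) - UU n (i+1)) * UU n (i+2)
        = UU n (i+1+2) * UU n (i+1+1) - UU n (i+2) * UU n (i+1)
      rw [show i+1+2 = i+3 from by omega, show i+1+1 = i+2 from by omega]
      ring
    rw [Finset.sum_congr rfl hbody, Finset.sum_range_sub (fun j => UU n (j+2) * UU n (j+1)) n]
    show UU n (n+2) * UU n (n+1) - UU n (0+2) * UU n (0+1) + AA n (1+0) * UU n (1+0) = _
    norm_num
    rw [A1U n]
    ring
  rw [htel]
  -- Step 4: boundary values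
  have hU0 : UU n 0 = -Γ := by
    unfold UU
    rw [show Finset.Ico 1 0 = (∅ : Finset ℕ) from Finset.Ico_eq_empty (by omega),
      Finset.sum_empty, show (0:ℕ)+1 = 1 from rfl, hΓ]
    ring
  have hUtop : UU n (n+2) = Γ := by
    unfold UU
    rw [show Finset.Ico (n+2+1) (n+2) = (∅ : Finset ℕ) from Finset.Ico_eq_empty (by omega),
      Finset.sum_empty, hΓ]
    ring
  have hU1 : UU n 1 = -(Γ - cc n 1) := by
    unfold UU
    rw [show Finset.Ico 1 1 = (∅ : Finset ℕ) from Finset.Ico_self _, Finset.sum_empty]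
    have h2 : ∑ q ∈ Ico 1 (n+2), cc n q = cc n 1 + ∑ q ∈ Ico (1+1) (n+2), cc n q :=
      Finset.sum_eq_sum_Ico_succ_bot (by omega) _
    rw [hΓ, h2]
    ring
  have hUn1 : UU n (n+1) = Γ := by
    unfold UU
    rw [show Finset.Ico (n+1+1) (n+2) = (∅ : Finset ℕ) from Finset.Ico_self _, Finset.sum_empty]
    have h2 : ∑ q ∈ Ico 1 (n+2), cc n q = (∑ q ∈ Ico 1 (n+1), cc n q) + cc n (n+1) :=
      Finset.sum_Ico_succ_top (by omega) _
    rw [hΓ, h2, cc_top n (n+1) (by omega)]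
    ring
  -- Step 5: the two sums on the RHS
  have hR1 : ∑ p ∈ Finset.Icc 1 (n+1), cc n p = Γ := by
    rw [show Finset.Icc 1 (n+1) = Finset.Ico 1 (n+2) from (Finset.Ico_add_one_right_eq_Icc _ _).symm, hΓ]
  have hR2 : ∑ p ∈ Finset.Icc 1 (n+1), cc n (p+1) = Γ - cc n 1 := by
    rw [show Finset.Icc 1 (n+1) = Finset.Ico 1 (n+2) from (Finset.Ico_add_one_right_eq_Icc _ _).symm]
    have hshift : ∑ p ∈ Ico 1 (n+2), cc n (p+1) = ∑ q ∈ Ico 2 (n+3), cc n q := by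
      rw [Finset.sum_Ico_eq_sum_range, Finset.sum_Ico_eq_sum_range,
        show n+2-1 = n+1 from by omega, show n+3-2 = n+1 from by omega]
      refine Finset.sum_congr rfl (fun i hi => ?_)
      rw [show 2+i = 1+i+1 from by omega]
    rw [hshift, Finset.sum_Ico_succ_top (by omega), cc_top n (n+2) (by omega)]
    have h2 : ∑ q ∈ Ico 1 (n+2), cc n q = cc n 1 + ∑ q ∈ Ico (1+1) (n+2), cc n q :=
      Finset.sum_eq_sum_Ico_succ_bot (by omega) _
    rw [hΓ, h2]
    ring
  rw [hU0, hUtop, hU1, hUn1, hR1, hR2]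
  ring
end
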